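/- arXiv:1505.02926 — 3 statements merged into one kernel-verified Lean document; each statement's English description precedes it below -/
import Mathlib

section
/- Let f : [a,b] → ℝ be a bounded variation (càdlàg) function and g : [a,b] → ℝ be a càdlàg function. Then the deterministic forward integral ∫_{[a,b]} g(s) d⁻f(s), defined as the limit as ε → 0⁺ of ∫_ℝ g_J(s) (f_{J̄}(s+ε) − f_{J̄}(s))/ε ds, exists and equals the Lebesgue–Stieltjes integral g(a)f(a) + ∫_{]a,b]} g(s⁻) df(s). -/
open MeasureTheory Filter Topology Set


lemma meas_of_rc {φ : ℝ → ℝ} (h : ∀ x, Tendsto φ (𝓝[≥] x) (𝓝 (φ x))) : Measurable φ := by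
  have key : ∀ n : ℕ, Measurable (fun x : ℝ => φ ((⌈x * 2 ^ n⌉ : ℤ) / 2 ^ n)) := by
    intro n
    exact (measurable_of_countable (fun k : ℤ => φ ((k : ℝ) / 2 ^ n))).comp
      (Int.measurable_ceil.comp (measurable_id.mul_const _))
  apply measurable_of_tendsto_metrizable key
  rw [tendsto_pi_nhds]
  intro x
  have hpow : ∀ n : ℕ, (0:ℝ) < 2 ^ n := fun n => by positivity
  set k : ℕ → ℝ := fun n => (⌈x * 2 ^ n⌉ : ℝ) / 2 ^ n with hk
  have h1 : ∀ n, x ≤ k n := by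
    intro n
    rw [le_div_iff₀ (hpow n)]
    exact Int.le_ceil _
  have h2 : ∀ n, k n ≤ x + (2 ^ n)⁻¹ := by
    intro n
    rw [div_le_iff₀ (hpow n), add_mul, inv_mul_cancel₀ (hpow n).ne']
    exact (Int.ceil_lt_add_one _).le
  have hto : Tendsto k atTop (𝓝 x) := by
    have hub : Tendsto (fun n : ℕ => x + (2 ^ n : ℝ)⁻¹) atTop (𝓝 (x + 0)) := by
      exact tendsto_const_nhds.add
        (tendsto_inv_atTop_zero.comp (tendsto_pow_atTop_atTop_of_one_lt (by norm_num)))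
    rw [add_zero] at hub
    exact tendsto_of_tendsto_of_tendsto_of_le_of_le tendsto_const_nhds hub h1 h2
  have hto' : Tendsto k atTop (𝓝[≥] x) :=
    tendsto_nhdsWithin_of_tendsto_nhds_of_eventually_within _ hto (.of_forall h1)
  exact (h x).comp hto'

lemma intOn {φ : ℝ → ℝ} (hm : Measurable φ) {M : ℝ} (hb : ∀ x, |φ x| ≤ M) (s : Set ℝ)
    (hs : volume s ≠ ⊤) : IntegrableOn φ s volume :=
  Measure.integrableOn_of_bounded hs hm.aestronglyMeasurable
    (Filter.Eventually.of_forall fun x => (Real.norm_eq_abs _) ▸ hb x)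

lemma avg_tendsto {φ : ℝ → ℝ} (hm : Measurable φ) {M : ℝ} (hb : ∀ x, |φ x| ≤ M)
    {u L : ℝ} (h : Tendsto φ (𝓝[<] u) (𝓝 L)) :
    Tendsto (fun ε : ℝ => (∫ s in Ico (u - ε) u, φ s) / ε) (𝓝[>] (0:ℝ)) (𝓝 L) := by
  rw [Metric.tendsto_nhdsWithin_nhds]
  intro δ hδ
  rw [Metric.tendsto_nhdsWithin_nhds] at h
  obtain ⟨η, hη, hsmall⟩ := h (δ/2) (by linarith)
  refine ⟨η, hη, fun {ε} hε hεη => ?_⟩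
  rw [mem_Ioi] at hε
  rw [Real.dist_eq, sub_zero, abs_of_pos hε] at hεη
  have hvol : volume (Ico (u - ε) u) = ENNReal.ofReal ε := by
    rw [Real.volume_Ico]; ring_nf
  have hIφ : IntegrableOn φ (Ico (u - ε) u) volume :=
    intOn hm hb _ (by rw [hvol]; exact ENNReal.ofReal_ne_top)
  have key : |(∫ s in Ico (u - ε) u, φ s) - ε * L| ≤ ε * (δ/2) := by
    have heq : (∫ s in Ico (u - ε) u, φ s) - ε * L
        = ∫ s in Ico (u - ε) u, (φ s - L) := by
      rw [integral_sub hIφ (integrable_const _), setIntegral_const, measureReal_def, hvol,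
        ENNReal.toReal_ofReal hε.le, smul_eq_mul]
    have hbd := norm_setIntegral_le_of_norm_le_const (μ := volume)
      (s := Ico (u - ε) u) (C := δ/2) (f := fun s => φ s - L)
      (by rw [hvol]; exact ENNReal.ofReal_lt_top)
      (fun s hs => by
        rw [Real.norm_eq_abs, ← Real.dist_eq]
        refine (hsmall (mem_Iio.2 hs.2) ?_).le
        rw [Real.dist_eq]
        simp only [mem_Ico] at hs
        rw [abs_of_nonpos (by linarith : s - u ≤ 0)]
        linarith)
    rw [heq, ← Real.norm_eq_abs]
    calc ‖∫ s in Ico (u - ε) u, (φ s - L)‖ ≤ δ/2 * (volume (Ico (u-ε) u)).toReal := hbd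
      _ = ε * (δ/2) := by rw [hvol, ENNReal.toReal_ofReal hε.le]; ring
  rw [Real.dist_eq]
  have heq2 : (∫ s in Ico (u - ε) u, φ s) / ε - L = ((∫ s in Ico (u - ε) u, φ s) - ε * L) / ε := by
    field_simp
  rw [heq2, abs_div, abs_of_pos hε, div_lt_iff₀ hε]
  nlinarith

lemma fubini_step (S : StieltjesFunction ℝ) [IsFiniteMeasure S.measure]
    {φ : ℝ → ℝ} (hm : Measurable φ) {M : ℝ} (hb : ∀ x, |φ x| ≤ M)
    {ε : ℝ} (hε : 0 < ε) :
    ∫ s : ℝ, φ s * (S (s + ε) - S s) / ε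
      = ∫ x, (∫ s in Ico (x - ε) x, φ s) / ε ∂S.measure := by
  set μ := S.measure
  set E : Set (ℝ × ℝ) := {p : ℝ × ℝ | p.1 < p.2 ∧ p.2 ≤ p.1 + ε} with hE
  have hEmeas : MeasurableSet E :=
    (measurableSet_lt measurable_fst measurable_snd).inter
      (measurableSet_le measurable_snd (measurable_fst.add_const ε))
  have hslice1 : ∀ s : ℝ, Prod.mk s ⁻¹' E = Ioc s (s + ε) := by
    intro s; ext x; simp [hE, Ioc, and_comm]
  have hslice2 : ∀ x : ℝ, (fun s => (s, x)) ⁻¹' E = Ico (x - ε) x := by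
    intro x; ext s; simp only [hE, mem_preimage, mem_setOf_eq, mem_Ico]
    constructor <;> intro ⟨h1, h2⟩ <;> constructor <;> linarith
  have hEvol : (volume.prod μ) E = ENNReal.ofReal ε * μ univ := by
    rw [Measure.prod_apply_symm hEmeas]
    simp_rw [hslice2, Real.volume_Ico, show ∀ x : ℝ, x - (x - ε) = ε by intro x; ring]
    rw [lintegral_const]
  set F : ℝ → ℝ → ℝ := fun s x => φ s * E.indicator (fun _ => (1:ℝ)) (s, x) / ε with hF
  have hFint : Integrable (Function.uncurry F) (volume.prod μ) := by
    constructor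
    · refine (Measurable.aestronglyMeasurable ?_)
      exact ((hm.comp measurable_fst).mul
        ((measurable_const.indicator hEmeas))).div_const ε
    · show (∫⁻ p, ‖Function.uncurry F p‖₊ ∂(volume.prod μ)) < ⊤
      calc ∫⁻ p, ‖Function.uncurry F p‖₊ ∂(volume.prod μ)
          ≤ ∫⁻ p, E.indicator (fun _ => ENNReal.ofReal (M / ε)) p ∂(volume.prod μ) := by
            refine lintegral_mono fun p => ?_
            by_cases hp : p ∈ E
            · simp only [hp, indicator_of_mem, Function.uncurry, hF]
              rw [show ∀ r : ℝ, (‖r‖₊ : ENNReal) = ENNReal.ofReal |r| from fun r => Real.enorm_eq_ofReal_abs r]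
              refine ENNReal.ofReal_le_ofReal ?_
              rw [mul_one, abs_div, abs_of_pos hε, div_le_div_iff_of_pos_right hε]
              exact hb _
            · simp only [Function.uncurry, hF]
              have h1 : ((p.1, p.2) : ℝ × ℝ) = p := rfl
              rw [h1, indicator_of_notMem hp, indicator_of_notMem hp]
              simp
        _ = ENNReal.ofReal (M / ε) * (volume.prod μ) E := by
            rw [lintegral_indicator hEmeas]; simp [mul_comm]
        _ < ⊤ := by
            rw [hEvol]
            exact ENNReal.mul_lt_top ENNReal.ofReal_lt_top
              (ENNReal.mul_lt_top ENNReal.ofReal_lt_top (measure_lt_top _ _))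
  have hswap := MeasureTheory.integral_integral_swap hFint
  have hlhs : (∫ s, ∫ x, F s x ∂μ) = ∫ s : ℝ, φ s * (S (s + ε) - S s) / ε := by
    refine integral_congr_ae (.of_forall fun s => ?_)
    have hx : ∀ x, E.indicator (fun _ => (1:ℝ)) (s, x)
        = (Ioc s (s + ε)).indicator (fun _ => (1:ℝ)) x := by
      intro x
      have hiff : ((s, x) ∈ E) ↔ x ∈ Ioc s (s + ε) := by
        rw [show ((s,x) ∈ E ↔ x ∈ Prod.mk s ⁻¹' E) from Iff.rfl, hslice1 s]
      by_cases h : x ∈ Ioc s (s + ε)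
      · rw [indicator_of_mem (hiff.mpr h), indicator_of_mem h]
      · rw [indicator_of_notMem (fun hc => h (hiff.mp hc)), indicator_of_notMem h]
    simp only [hF]
    simp_rw [hx]
    rw [integral_div, integral_const_mul,
      integral_indicator_const (1:ℝ) measurableSet_Ioc, measureReal_def,
      StieltjesFunction.measure_Ioc,
      ENNReal.toReal_ofReal (sub_nonneg.2 (S.mono (by linarith))), smul_eq_mul, mul_one]
  
  have hrhs : (∫ y, (∫ x, F x y) ∂μ) = ∫ x, (∫ s in Ico (x - ε) x, φ s) / ε ∂μ := by
    refine integral_congr_ae (.of_forall fun x => ?_)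
    have hs' : ∀ s, F s x = (Ico (x - ε) x).indicator (fun s => φ s / ε) s := by
      intro s
      have hiff : ((s, x) ∈ E) ↔ s ∈ Ico (x - ε) x := by
        rw [show ((s,x) ∈ E ↔ s ∈ (fun s => (s, x)) ⁻¹' E) from Iff.rfl, hslice2 x]
      by_cases h : s ∈ Ico (x - ε) x
      · rw [indicator_of_mem h]; simp only [hF]; rw [indicator_of_mem (hiff.mpr h), mul_one]
      · rw [indicator_of_notMem h]; simp only [hF]
        rw [indicator_of_notMem (fun hc => h (hiff.mp hc))]; simp
    simp_rw [hs']
    rw [integral_indicator measurableSet_Ico, integral_div]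
  rw [← hlhs, hswap, hrhs]

lemma stieltjes_limit (S : StieltjesFunction ℝ) {l u : ℝ}
    (hl : Tendsto S atBot (𝓝 l)) (hu : Tendsto S atTop (𝓝 u))
    {φ Λ : ℝ → ℝ} (hm : Measurable φ) {M : ℝ} (hb : ∀ x, |φ x| ≤ M)
    (hΛ : ∀ x, Tendsto φ (𝓝[<] x) (𝓝 (Λ x))) :
    Tendsto (fun ε : ℝ => ∫ s : ℝ, φ s * (S (s + ε) - S s) / ε) (𝓝[>] (0:ℝ))
      (𝓝 (∫ x, Λ x ∂S.measure)) := by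
  haveI : IsFiniteMeasure S.measure := S.isFiniteMeasure hl hu
  have hM0 : 0 ≤ M := le_trans (abs_nonneg _) (hb 0)
  have hII : ∀ c d : ℝ, IntervalIntegrable φ volume c d := by
    intro c d
    rw [intervalIntegrable_iff]
    exact intOn hm hb _ measure_Ioc_lt_top.ne
  have hIco : ∀ c d : ℝ, c ≤ d → ∫ s in Ico c d, φ s = ∫ s in c..d, φ s := by
    intro c d hcd
    rw [intervalIntegral.integral_of_le hcd, integral_Ico_eq_integral_Ioo,
      integral_Ioc_eq_integral_Ioo]
  have hDCT := MeasureTheory.tendsto_integral_filter_of_dominated_convergence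
    (μ := S.measure) (F := fun (ε : ℝ) (x : ℝ) => (∫ s in Ico (x - ε) x, φ s) / ε)
    (f := Λ) (l := 𝓝[>] (0:ℝ)) (bound := fun _ => M)
    ?_ ?_ (integrable_const M) ?_
  · refine (Tendsto.congr' ?_ hDCT)
    filter_upwards [self_mem_nhdsWithin] with ε (hε : 0 < ε)
    exact (fubini_step S hm hb hε).symm
  · filter_upwards [self_mem_nhdsWithin] with ε (hε : 0 < ε)
    have hcont := intervalIntegral.continuous_primitive hII 0
    have hpt : ∀ x : ℝ, (∫ s in Ico (x - ε) x, φ s)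
        = (∫ s in (0:ℝ)..x, φ s) - ∫ s in (0:ℝ)..(x - ε), φ s := by
      intro x
      rw [intervalIntegral.integral_interval_sub_left (hII 0 x) (hII 0 (x - ε)),
        hIco _ _ (by linarith)]
    have : Continuous fun x : ℝ => (∫ s in Ico (x - ε) x, φ s) / ε := by
      simp only [hpt]
      exact (hcont.sub (hcont.comp (continuous_id.sub continuous_const))).div_const ε
    exact this.aestronglyMeasurable
  · filter_upwards [self_mem_nhdsWithin] with ε (hε : 0 < ε)
    refine Eventually.of_forall fun x => ?_
    rw [Real.norm_eq_abs, abs_div, abs_of_pos hε, div_le_iff₀ hε]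
    have hvol : volume (Ico (x - ε) x) = ENNReal.ofReal ε := by
      rw [Real.volume_Ico]; ring_nf
    calc |∫ s in Ico (x - ε) x, φ s| ≤ M * (volume (Ico (x - ε) x)).toReal := by
          rw [← Real.norm_eq_abs]
          exact norm_setIntegral_le_of_norm_le_const
            (by rw [hvol]; exact ENNReal.ofReal_lt_top)
            (fun s _ => (Real.norm_eq_abs _) ▸ hb s)
      _ = M * ε := by rw [hvol, ENNReal.toReal_ofReal hε.le]
  · exact Eventually.of_forall fun x => avg_tendsto hm hb (hΛ x)

lemma stieltjes_diff_integrable (S : StieltjesFunction ℝ) [IsFiniteMeasure S.measure]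
    {ε : ℝ} (hε : 0 < ε) : Integrable (fun s : ℝ => S (s + ε) - S s) := by
  have hmeas : Measurable fun s : ℝ => S (s + ε) - S s :=
    ((S.mono.measurable).comp (measurable_add_const ε)).sub S.mono.measurable
  have heq : (fun s : ℝ => S (s + ε) - S s)
      = fun s : ℝ => (S.measure (Ioc s (s + ε))).toReal := by
    funext s
    rw [StieltjesFunction.measure_Ioc,
      ENNReal.toReal_ofReal (sub_nonneg.2 (S.mono (by linarith)))]
  have hmeas2 : Measurable fun s : ℝ => S.measure (Ioc s (s + ε)) := by
    have : (fun s : ℝ => S.measure (Ioc s (s + ε)))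
        = fun s : ℝ => ENNReal.ofReal (S (s + ε) - S s) := by
      funext s; rw [StieltjesFunction.measure_Ioc]
    rw [this]
    exact hmeas.ennreal_ofReal
  have key : ∫⁻ s : ℝ, S.measure (Ioc s (s + ε)) = ENNReal.ofReal ε * S.measure univ := by
    set E : Set (ℝ × ℝ) := {p : ℝ × ℝ | p.1 < p.2 ∧ p.2 ≤ p.1 + ε} with hE
    have hEmeas : MeasurableSet E :=
      (measurableSet_lt measurable_fst measurable_snd).inter
        (measurableSet_le measurable_snd (measurable_fst.add_const ε))
    have hslice1 : ∀ s : ℝ, Prod.mk s ⁻¹' E = Ioc s (s + ε) := by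
      intro s; ext x; simp [hE, Ioc, and_comm]
    have hslice2 : ∀ x : ℝ, (fun s => (s, x)) ⁻¹' E = Ico (x - ε) x := by
      intro x; ext s; simp only [hE, mem_preimage, mem_setOf_eq, mem_Ico]
      constructor <;> intro ⟨h1, h2⟩ <;> constructor <;> linarith
    have h1 : ∫⁻ s : ℝ, S.measure (Ioc s (s + ε)) = (volume.prod S.measure) E := by
      rw [Measure.prod_apply hEmeas]
      simp_rw [hslice1]
    rw [h1, Measure.prod_apply_symm hEmeas]
    simp_rw [hslice2, Real.volume_Ico, show ∀ x : ℝ, x - (x - ε) = ε by intro x; ring]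
    rw [lintegral_const]
  rw [heq]
  refine integrable_toReal_of_lintegral_ne_top hmeas2.aemeasurable ?_
  rw [key]
  exact (ENNReal.mul_lt_top ENNReal.ofReal_lt_top (measure_lt_top _ _)).ne

lemma cadlag_bounded {a b : ℝ} (hab : a < b) {g gl : ℝ → ℝ}
    (hg_rc : ∀ x ∈ Set.Ico a b, Tendsto g (𝓝[≥] x) (𝓝 (g x)))
    (hg_ll : ∀ x ∈ Set.Ioc a b, Tendsto g (𝓝[<] x) (𝓝 (gl x))) :
    ∃ M, ∀ x ∈ Set.Icc a b, |g x| ≤ M := by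
  by_contra hM
  push_neg at hM
  choose x hx hgx using fun n : ℕ => hM ((n : ℝ) + |g b|)
  obtain ⟨x₀, hx₀, ψ, hψ, hto⟩ :=
    tendsto_subseq_of_bounded (isCompact_Icc (a := a) (b := b)).isBounded hx
  rw [IsClosed.closure_eq isClosed_Icc] at hx₀
  have habs : ∀ (χ : ℕ → ℕ), StrictMono χ → ∀ L : ℝ,
      Tendsto (fun n => g (x (ψ (χ n)))) atTop (𝓝 L) → False := by
    intro χ hχ L hlim
    have hlow : ∀ n : ℕ, (n : ℝ) ≤ |g (x (ψ (χ n)))| := by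
      intro n
      have h1 := hgx (ψ (χ n))
      have h2 : (n : ℝ) ≤ ((ψ (χ n) : ℕ) : ℝ) := by
        exact_mod_cast (hχ.le_apply.trans hψ.le_apply)
      have h3 : (0 : ℝ) ≤ |g b| := abs_nonneg _
      linarith
    have htop : Tendsto (fun n => |g (x (ψ (χ n)))|) atTop atTop :=
      tendsto_atTop_mono hlow tendsto_natCast_atTop_atTop
    exact not_tendsto_atTop_of_tendsto_nhds hlim.abs htop
  by_cases hfreq : ∃ᶠ n in atTop, x (ψ n) < x₀
  · obtain ⟨χ, hχ, hlt⟩ := extraction_of_frequently_atTop hfreq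
    have hx₀a : a < x₀ := lt_of_le_of_lt (hx (ψ (χ 0))).1 (hlt 0)
    have hll := hg_ll x₀ ⟨hx₀a, hx₀.2⟩
    have hseq : Tendsto (fun n => x (ψ (χ n))) atTop (𝓝[<] x₀) :=
      tendsto_nhdsWithin_of_tendsto_nhds_of_eventually_within _
        (hto.comp hχ.tendsto_atTop) (Eventually.of_forall hlt)
    exact habs χ hχ _ (hll.comp hseq)
  · have hev : ∀ᶠ n in atTop, x₀ ≤ x (ψ n) := by
      filter_upwards [not_frequently.mp hfreq] with n hn
      exact not_lt.mp hn
    obtain ⟨χ, hχ, hge⟩ := extraction_of_eventually_atTop hev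
    rcases eq_or_lt_of_le hx₀.2 with hx₀b | hx₀b
    · have h0 : x (ψ (χ 0)) = b := le_antisymm (hx _).2 (hx₀b ▸ hge 0)
      have := hgx (ψ (χ 0))
      rw [h0] at this
      have : ((ψ (χ 0) : ℕ) : ℝ) < 0 := by linarith
      exact absurd this (not_lt.mpr (by positivity))
    · have hrc := hg_rc x₀ ⟨hx₀.1, hx₀b⟩
      have hseq : Tendsto (fun n => x (ψ (χ n))) atTop (𝓝[≥] x₀) :=
        tendsto_nhdsWithin_of_tendsto_nhds_of_eventually_within _
          (hto.comp hχ.tendsto_atTop) (Eventually.of_forall hge)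
      exact habs χ hχ _ (hrc.comp hseq)

noncomputable def clampSt (a b : ℝ) (F : StieltjesFunction ℝ) : StieltjesFunction ℝ where
  toFun := fun x => F (max a (min x b))
  mono' := fun x y hxy => F.mono (max_le_max le_rfl (min_le_min hxy le_rfl))
  right_continuous' := fun x => by
    have hc : Continuous fun x : ℝ => max a (min x b) :=
      continuous_const.max (continuous_id.min continuous_const)
    exact (F.right_continuous _).comp hc.continuousWithinAt
      (fun y hy => Set.mem_Ici.2 (max_le_max le_rfl (min_le_min (Set.mem_Ici.1 hy) le_rfl)))

lemma clampSt_apply (a b : ℝ) (F : StieltjesFunction ℝ) (x : ℝ) :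
    clampSt a b F x = F (max a (min x b)) := rfl

lemma clampSt_apply_of_mem {a b : ℝ} (F : StieltjesFunction ℝ) {x : ℝ} (hx : x ∈ Set.Icc a b) :
    clampSt a b F x = F x := by
  rw [clampSt_apply, min_eq_left hx.2, max_eq_right hx.1]

lemma clampSt_atBot {a b : ℝ} (hab : a ≤ b) (F : StieltjesFunction ℝ) :
    Tendsto (clampSt a b F) atBot (𝓝 (F a)) := by
  refine tendsto_const_nhds.congr' ?_
  filter_upwards [eventually_le_atBot a] with x hx
  rw [clampSt_apply, min_eq_left (hx.trans hab), max_eq_left hx]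

lemma clampSt_atTop {a b : ℝ} (hab : a ≤ b) (F : StieltjesFunction ℝ) :
    Tendsto (clampSt a b F) atTop (𝓝 (F b)) := by
  refine tendsto_const_nhds.congr' ?_
  filter_upwards [eventually_ge_atTop b] with x hx
  rw [clampSt_apply, min_eq_right hx, max_eq_right hab]

/-- Forward integral of a càdlàg `g` with respect to a càdlàg bounded variation `f`
(written as a difference of Stieltjes functions on `[a,b]`) exists and equals the
Lebesgue–Stieltjes integral `g(a)f(a) + ∫_{]a,b]} g(s⁻) df(s)`. -/
theorem stmt0 (a b : ℝ) (hab : a < b) (f g gl : ℝ → ℝ)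
    (f₁ f₂ : StieltjesFunction ℝ)
    (hf : ∀ x ∈ Set.Icc a b, f x = f₁ x - f₂ x)
    (hg_rc : ∀ x ∈ Set.Ico a b, Tendsto g (𝓝[≥] x) (𝓝 (g x)))
    (hg_ll : ∀ x ∈ Set.Ioc a b, Tendsto g (𝓝[<] x) (𝓝 (gl x))) :
    Tendsto
      (fun ε : ℝ => ∫ s : ℝ,
        (if s < a then g a else if s ≤ b then g s else 0) *
          ((if s + ε < a then 0 else if s + ε ≤ b then f (s + ε) else f b) -
            (if s < a then 0 else if s ≤ b then f s else f b)) / ε)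
      (𝓝[>] 0)
      (𝓝 (g a * f a +
        ((∫ s in Set.Ioc a b, gl s ∂f₁.measure) -
          ∫ s in Set.Ioc a b, gl s ∂f₂.measure))) := by
  set gJ : ℝ → ℝ := fun s => if s < a then g a else if s ≤ b then g s else 0 with hgJ
  set fbar : ℝ → ℝ := fun x => if x < a then 0 else if x ≤ b then f x else f b with hfbardef
  set G₁ := clampSt a b f₁ with hG₁
  set G₂ := clampSt a b f₂ with hG₂
  haveI : IsFiniteMeasure G₁.measure := G₁.isFiniteMeasure (clampSt_atBot hab.le f₁) (clampSt_atTop hab.le f₁)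
  haveI : IsFiniteMeasure G₂.measure := G₂.isFiniteMeasure (clampSt_atBot hab.le f₂) (clampSt_atTop hab.le f₂)
  -- measurability of gJ
  have hgJmeas : Measurable gJ := by
    set g' : ℝ → ℝ := fun s => if s < a then g a else if s < b then g s else 0 with hg'def
    have hg'rc : ∀ x, Tendsto g' (𝓝[≥] x) (𝓝 (g' x)) := by
      intro x
      rcases lt_or_ge x a with hxa | hxa
      · have hev : ∀ᶠ s in 𝓝[≥] x, g' s = g a := by
          filter_upwards [eventually_nhdsWithin_of_eventually_nhds
            (Filter.Tendsto.eventually_lt_const hxa (f := fun s : ℝ => s) (by exact fun _ h => h))] with s hs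
          simp only [hg'def, if_pos hs]
        have hx : g' x = g a := by simp only [hg'def, if_pos hxa]
        rw [hx]
        exact tendsto_const_nhds.congr' (by filter_upwards [hev] with s hs; exact hs.symm)
      · rcases lt_or_ge x b with hxb | hxb
        · have hev : ∀ᶠ s in 𝓝[≥] x, g' s = g s := by
            filter_upwards [eventually_nhdsWithin_of_eventually_nhds
              (Filter.Tendsto.eventually_lt_const hxb (f := fun s : ℝ => s) (by exact fun _ h => h)),
              eventually_mem_nhdsWithin] with s hs (hs' : s ∈ Ici x)
            have : ¬ s < a := not_lt.2 (hxa.trans hs')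
            simp only [hg'def, if_neg this, if_pos hs]
          have hx : g' x = g x := by
            simp only [hg'def, if_neg (not_lt.2 hxa), if_pos hxb]
          rw [hx]
          exact (hg_rc x ⟨hxa, hxb⟩).congr' (by filter_upwards [hev] with s hs; exact hs.symm)
        · have hev : ∀ᶠ s in 𝓝[≥] x, g' s = 0 := by
            filter_upwards [eventually_mem_nhdsWithin] with s (hs : s ∈ Ici x)
            have h1 : ¬ s < a := not_lt.2 ((hab.le.trans hxb).trans hs)
            have h2 : ¬ s < b := not_lt.2 (hxb.trans hs)
            simp only [hg'def, if_neg h1, if_neg h2]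
          have hx : g' x = 0 := by
            simp only [hg'def, if_neg (not_lt.2 hxa), if_neg (not_lt.2 hxb)]
          rw [hx]
          exact tendsto_const_nhds.congr' (by filter_upwards [hev] with s hs; exact hs.symm)
    have hgJeq : gJ = fun s => if s = b then g b else g' s := by
      funext s
      rcases eq_or_ne s b with rfl | hsb
      · simp [hgJ, hg'def, not_lt.2 hab.le]
      · rcases lt_or_ge s a with hsa | hsa
        · simp only [hgJ, hg'def, if_pos hsa, if_neg hsb]
        · rcases lt_or_ge s b with hsb' | hsb'
          · simp only [hgJ, hg'def, if_neg (not_lt.2 hsa), if_pos hsb'.le, if_pos hsb', if_neg hsb]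
          · have : ¬ s ≤ b := fun h => hsb (le_antisymm h hsb')
            simp only [hgJ, hg'def, if_neg (not_lt.2 hsa), if_neg this, if_neg hsb,
              if_neg (not_lt.2 hsb')]
    rw [hgJeq]
    exact Measurable.ite (MeasurableSet.singleton b) measurable_const (meas_of_rc hg'rc)
  -- boundedness of gJ
  obtain ⟨M, hM⟩ := cadlag_bounded hab hg_rc hg_ll
  have hgJbd : ∀ s, |gJ s| ≤ M := by
    intro s
    rcases lt_or_ge s a with hsa | hsa
    · simpa only [hgJ, if_pos hsa] using hM a ⟨le_rfl, hab.le⟩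
    · rcases le_or_gt s b with hsb | hsb
      · simpa only [hgJ, if_neg (not_lt.2 hsa), if_pos hsb] using hM s ⟨hsa, hsb⟩
      · have h0 : |gJ s| = 0 := by
          simp only [hgJ, if_neg (not_lt.2 hsa), if_neg (not_le.2 hsb), abs_zero]
        rw [h0]
        exact le_trans (abs_nonneg (g a)) (hM a ⟨le_rfl, hab.le⟩)
  -- value of fbar in terms of the clamped Stieltjes functions
  have hfa : f a = f₁ a - f₂ a := hf a ⟨le_rfl, hab.le⟩
  have hfbar : ∀ x, fbar x = G₁ x - G₂ x - (if x < a then f a else 0) := by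
    intro x
    rcases lt_or_ge x a with hxa | hxa
    · have h1 : G₁ x = f₁ a := by
        rw [hG₁, clampSt_apply, min_eq_left (hxa.le.trans hab.le), max_eq_left hxa.le]
      have h2 : G₂ x = f₂ a := by
        rw [hG₂, clampSt_apply, min_eq_left (hxa.le.trans hab.le), max_eq_left hxa.le]
      simp only [hfbardef, if_pos hxa, h1, h2]
      linarith
    · rcases le_or_gt x b with hxb | hxb
      · have h1 : G₁ x = f₁ x := by rw [hG₁]; exact clampSt_apply_of_mem f₁ ⟨hxa, hxb⟩
        have h2 : G₂ x = f₂ x := by rw [hG₂]; exact clampSt_apply_of_mem f₂ ⟨hxa, hxb⟩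
        simp only [hfbardef, if_neg (not_lt.2 hxa), if_pos hxb, h1, h2]
        rw [hf x ⟨hxa, hxb⟩]
        ring
      · have h1 : G₁ x = f₁ b := by
          rw [hG₁, clampSt_apply, min_eq_right hxb.le, max_eq_right hab.le]
        have h2 : G₂ x = f₂ b := by
          rw [hG₂, clampSt_apply, min_eq_right hxb.le, max_eq_right hab.le]
        simp only [hfbardef, if_neg (not_lt.2 hxa), if_neg (not_le.2 hxb), h1, h2]
        rw [hf b ⟨hab.le, le_rfl⟩]
        ring
  -- the left-limit function
  set Λ : ℝ → ℝ := fun u => if u ≤ a then g a else if u ≤ b then gl u else 0 with hΛdef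
  have hΛ : ∀ u, Tendsto gJ (𝓝[<] u) (𝓝 (Λ u)) := by
    intro u
    rcases le_or_gt u a with hua | hua
    · have hΛu : Λ u = g a := by simp only [hΛdef, if_pos hua]
      rw [hΛu]
      refine tendsto_const_nhds.congr' ?_
      filter_upwards [self_mem_nhdsWithin] with s (hs : s ∈ Iio u)
      simp only [hgJ, if_pos (lt_of_lt_of_le hs hua)]
    · rcases le_or_gt u b with hub | hub
      · have hΛu : Λ u = gl u := by simp only [hΛdef, if_neg (not_le.2 hua), if_pos hub]
        rw [hΛu]
        refine (hg_ll u ⟨hua, hub⟩).congr' ?_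
        filter_upwards [self_mem_nhdsWithin,
          eventually_nhdsWithin_of_eventually_nhds (eventually_gt_nhds hua)]
          with s (hs : s ∈ Iio u) (hsa : a < s)
        simp only [hgJ, if_neg (not_lt.2 hsa.le), if_pos ((le_of_lt hs).trans hub)]
      · have hΛu : Λ u = 0 := by
          simp only [hΛdef, if_neg (not_le.2 (hab.trans hub)), if_neg (not_le.2 hub)]
        rw [hΛu]
        refine tendsto_const_nhds.congr' ?_
        filter_upwards [eventually_nhdsWithin_of_eventually_nhds (eventually_gt_nhds hub)]
          with s (hsb : b < s)
        simp only [hgJ, if_neg (not_lt.2 ((hab.trans hsb).le)), if_neg (not_le.2 hsb)]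
  -- limits on the Stieltjes side
  have h1 := stieltjes_limit G₁ (clampSt_atBot hab.le f₁) (clampSt_atTop hab.le f₁)
    hgJmeas hgJbd hΛ
  have h2 := stieltjes_limit G₂ (clampSt_atBot hab.le f₂) (clampSt_atTop hab.le f₂)
    hgJmeas hgJbd hΛ
  -- identification of the limit values
  have hval : ∀ F : StieltjesFunction ℝ,
      ∫ x, Λ x ∂(clampSt a b F).measure = ∫ s in Set.Ioc a b, gl s ∂F.measure := by
    intro F
    have hbot := clampSt_atBot hab.le F
    have htop := clampSt_atTop hab.le F
    haveI : IsFiniteMeasure (clampSt a b F).measure := (clampSt a b F).isFiniteMeasure hbot htop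
    have hIic : (clampSt a b F).measure (Iic a) = 0 := by
      rw [StieltjesFunction.measure_Iic _ hbot a, clampSt_apply_of_mem F ⟨le_rfl, hab.le⟩,
        sub_self, ENNReal.ofReal_zero]
    have hIoi : (clampSt a b F).measure (Ioi b) = 0 := by
      have huniv : (clampSt a b F).measure univ = ENNReal.ofReal (F b - F a) :=
        StieltjesFunction.measure_univ _ hbot htop
      have hIicb : (clampSt a b F).measure (Iic b) = ENNReal.ofReal (F b - F a) := by
        rw [StieltjesFunction.measure_Iic _ hbot b, clampSt_apply_of_mem F ⟨hab.le, le_rfl⟩]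
      have hc := measure_compl (μ := (clampSt a b F).measure) (s := Iic b) measurableSet_Iic
        (measure_ne_top _ _)
      rw [compl_Iic] at hc
      rw [hc, hIicb, huniv, tsub_self]
    have hae : ∀ᵐ x ∂(clampSt a b F).measure, x ∈ Set.Ioc a b := by
      rw [ae_iff]
      refine measure_mono_null (fun x hx => ?_) (measure_union_null hIic hIoi)
      simp only [mem_Ioc, not_and_or, not_lt, not_le, mem_setOf_eq] at hx
      rcases hx with h | h
      · exact mem_union_left _ h
      · exact mem_union_right _ h
    have hres : (clampSt a b F).measure.restrict (Set.Ioc a b) = (clampSt a b F).measure :=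
      Measure.restrict_eq_self_of_ae_mem hae
    have hresν : (clampSt a b F).measure.restrict (Set.Ioc a b)
        = F.measure.restrict (Set.Ioc a b) := by
      refine Measure.ext_of_Ioc' _ _ (fun c d _ => ?_) (fun c d _ => ?_)
      · rw [Measure.restrict_apply measurableSet_Ioc]
        exact ((measure_mono inter_subset_left).trans_lt measure_Ioc_lt_top).ne
      · rw [Measure.restrict_apply measurableSet_Ioc, Measure.restrict_apply measurableSet_Ioc,
          Set.Ioc_inter_Ioc, StieltjesFunction.measure_Ioc, StieltjesFunction.measure_Ioc]
        rcases le_or_gt (max c a) (min d b) with hpq | hpq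
        · rw [clampSt_apply_of_mem F ⟨le_max_right c a, hpq.trans (min_le_right d b)⟩,
            clampSt_apply_of_mem F ⟨(le_max_right c a).trans hpq, min_le_right d b⟩]
        · rw [ENNReal.ofReal_of_nonpos (sub_nonpos.2 ((clampSt a b F).mono hpq.le)),
            ENNReal.ofReal_of_nonpos (sub_nonpos.2 (F.mono hpq.le))]
    calc ∫ x, Λ x ∂(clampSt a b F).measure
        = ∫ x in Set.Ioc a b, Λ x ∂(clampSt a b F).measure := by rw [hres]
      _ = ∫ x in Set.Ioc a b, Λ x ∂F.measure := by rw [hresν]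
      _ = ∫ s in Set.Ioc a b, gl s ∂F.measure :=
          setIntegral_congr_fun measurableSet_Ioc (fun x hx => by
            simp only [hΛdef, if_neg (not_le.2 hx.1), if_pos hx.2])
  -- splitting of the integral for each fixed ε > 0
  have hsplit : ∀ᶠ ε in 𝓝[>] (0:ℝ),
      (∫ s : ℝ, gJ s * (G₁ (s + ε) - G₁ s) / ε) - (∫ s : ℝ, gJ s * (G₂ (s + ε) - G₂ s) / ε)
        + g a * f a
      = ∫ s : ℝ, gJ s * (fbar (s + ε) - fbar s) / ε := by
    filter_upwards [self_mem_nhdsWithin] with ε (hε : (0:ℝ) < ε)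
    have hbdd : ∀ᵐ x ∂volume, ‖gJ x‖ ≤ M := .of_forall fun x => (Real.norm_eq_abs _) ▸ hgJbd x
    have hT₁ : Integrable (fun s : ℝ => gJ s * (G₁ (s + ε) - G₁ s) / ε) :=
      ((stieltjes_diff_integrable G₁ hε).bdd_mul hgJmeas.aestronglyMeasurable hbdd).div_const ε
    have hT₂ : Integrable (fun s : ℝ => gJ s * (G₂ (s + ε) - G₂ s) / ε) :=
      ((stieltjes_diff_integrable G₂ hε).bdd_mul hgJmeas.aestronglyMeasurable hbdd).div_const ε
    have hT₃ : Integrable ((Set.Ico (a - ε) a).indicator (fun _ => g a * f a / ε)) := by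
      refine (IntegrableOn.integrable_indicator ?_ measurableSet_Ico)
      refine integrableOn_const (ne_of_lt ?_)
      rw [Real.volume_Ico]
      exact ENNReal.ofReal_lt_top
    have hpt : ∀ s : ℝ, gJ s * (fbar (s + ε) - fbar s) / ε
        = gJ s * (G₁ (s + ε) - G₁ s) / ε - gJ s * (G₂ (s + ε) - G₂ s) / ε
          + (Set.Ico (a - ε) a).indicator (fun _ => g a * f a / ε) s := by
      intro s
      have hind : gJ s * ((if s < a then f a else 0) - (if s + ε < a then f a else 0)) / ε
          = (Set.Ico (a - ε) a).indicator (fun _ => g a * f a / ε) s := by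
        rcases lt_or_ge s a with hsa | hsa
        · rcases lt_or_ge (s + ε) a with hsea | hsea
          · rw [if_pos hsa, if_pos hsea, sub_self, mul_zero, zero_div,
              indicator_of_notMem (fun hc => absurd hsea (not_lt.2 (by linarith [hc.1])))]
          · rw [if_pos hsa, if_neg (not_lt.2 hsea), sub_zero,
              indicator_of_mem (Set.mem_Ico.mpr ⟨by linarith, hsa⟩)]
            simp only [hgJ, if_pos hsa]
        · have hsea : ¬ s + ε < a := not_lt.2 (by linarith)
          rw [if_neg (not_lt.2 hsa), if_neg hsea, sub_self, mul_zero, zero_div,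
            indicator_of_notMem (fun hc => (not_lt.2 hsa) hc.2)]
      rw [hfbar (s + ε), hfbar s, ← hind]
      ring
    have hT₃val : ∫ s : ℝ, (Set.Ico (a - ε) a).indicator (fun _ => g a * f a / ε) s
        = g a * f a := by
      rw [integral_indicator_const _ measurableSet_Ico, measureReal_def, Real.volume_Ico,
        show a - (a - ε) = ε by ring, ENNReal.toReal_ofReal hε.le, smul_eq_mul]
      field_simp
    have hT12 : Integrable (fun s : ℝ => gJ s * (G₁ (s + ε) - G₁ s) / ε
        - gJ s * (G₂ (s + ε) - G₂ s) / ε) := hT₁.sub hT₂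
    rw [show (fun s : ℝ => gJ s * (fbar (s + ε) - fbar s) / ε)
        = fun s : ℝ => gJ s * (G₁ (s + ε) - G₁ s) / ε - gJ s * (G₂ (s + ε) - G₂ s) / ε
          + (Set.Ico (a - ε) a).indicator (fun _ => g a * f a / ε) s from funext hpt,
      integral_add hT12 hT₃, integral_sub hT₁ hT₂, hT₃val]
  -- combine
  have hlim := (h1.sub h2).add_const (g a * f a)
  have hfinal := hlim.congr' hsplit
  have hvals : (∫ x, Λ x ∂G₁.measure) - (∫ x, Λ x ∂G₂.measure) + g a * f a
      = g a * f a + ((∫ s in Set.Ioc a b, gl s ∂f₁.measure)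
          - ∫ s in Set.Ioc a b, gl s ∂f₂.measure) := by
    rw [hG₁, hG₂, hval f₁, hval f₂]
    ring
  rw [hvals] at hfinal
  simp only [hgJ, hfbardef] at hfinal
  exact hfinal
end

section
/- Let f : [a,b] → ℝ be càdlàg and g : [a,b] → ℝ be of bounded variation. Then the deterministic forward integral satisfies the integration by parts formula: ∫_{[a,b]} g(s) d⁻f(s) = g(b)f(b) − ∫_{]a,b]} f(s) dg(s), whenever the forward integral exists. -/
open MeasureTheory Filter Topology Set

/-- A right-continuous real function is measurable. -/
lemma meas_of_rightCont (F : ℝ → ℝ) (h : ∀ x, Tendsto F (𝓝[≥] x) (𝓝 (F x))) :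
    Measurable F := by
  have hq : ∀ n : ℕ, Measurable (fun x : ℝ => F ((⌈x * 2 ^ n⌉ : ℝ) / 2 ^ n)) := by
    intro n
    have h1 : Measurable (fun k : ℤ => F ((k : ℝ) / 2 ^ n)) := measurable_of_countable _
    have h2 : Measurable (fun x : ℝ => (⌈x * 2 ^ n⌉ : ℤ)) :=
      Int.measurable_ceil.comp (measurable_id.mul_const _)
    exact h1.comp h2
  apply measurable_of_tendsto_metrizable hq
  rw [tendsto_pi_nhds]
  intro x
  have hle : ∀ n : ℕ, x ≤ (⌈x * 2 ^ n⌉ : ℝ) / 2 ^ n := by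
    intro n
    rw [le_div_iff₀ (by positivity : (0:ℝ) < 2 ^ n)]
    exact Int.le_ceil _
  have hub : ∀ n : ℕ, (⌈x * 2 ^ n⌉ : ℝ) / 2 ^ n ≤ x + 1 / 2 ^ n := by
    intro n
    rw [div_le_iff₀ (by positivity : (0:ℝ) < 2 ^ n)]
    have := (Int.ceil_lt_add_one (x * 2 ^ n)).le
    calc ((⌈x * 2 ^ n⌉ : ℝ)) ≤ x * 2 ^ n + 1 := this
      _ = (x + 1 / 2 ^ n) * 2 ^ n := by field_simp
  apply (h x).comp
  rw [tendsto_nhdsWithin_iff]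
  refine ⟨?_, Eventually.of_forall fun n => hle n⟩
  have hx : Tendsto (fun n : ℕ => x + 1 / 2 ^ n) atTop (𝓝 x) := by
    have h2 : Tendsto (fun n : ℕ => (1:ℝ) / 2 ^ n) atTop (𝓝 0) := by
      simpa [one_div_pow] using
        tendsto_pow_atTop_nhds_zero_of_lt_one (by norm_num : (0:ℝ) ≤ 1/2) (by norm_num)
    simpa using tendsto_const_nhds.add h2
  exact tendsto_of_tendsto_of_tendsto_of_le_of_le tendsto_const_nhds hx hle hub

/-- Right-continuity implies convergence of forward averages. -/
lemma avg_tendsto_s2 (F : ℝ → ℝ) (hF : Measurable F) (t : ℝ)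
    (h : Tendsto F (𝓝[≥] t) (𝓝 (F t))) :
    Tendsto (fun ε : ℝ => ε⁻¹ * ∫ s in Ico t (t + ε), F s) (𝓝[>] (0:ℝ)) (𝓝 (F t)) := by
  rw [Metric.tendsto_nhdsWithin_nhds]
  intro δ hδ
  have h' := (Metric.tendsto_nhdsWithin_nhds.mp h) (δ/2) (by linarith)
  obtain ⟨θ, hθ, hθ'⟩ := h'
  refine ⟨θ, hθ, ?_⟩
  intro ε hε hεθ
  rw [mem_Ioi] at hε
  rw [Real.dist_eq, sub_zero, abs_of_pos hε] at hεθ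
  -- compute: ε⁻¹ * ∫_{Ico} F - F t = ε⁻¹ * ∫_{Ico} (F s - F t)
  have hvol : volume (Ico t (t + ε)) = ENNReal.ofReal ε := by
    rw [Real.volume_Ico]; congr 1; ring
  have hIntF : IntegrableOn F (Ico t (t + ε)) := by
    apply Integrable.mono' (g := fun _ => (δ/2) + |F t|)
      (integrable_const _) (hF.aestronglyMeasurable.restrict)
    · filter_upwards [ae_restrict_mem measurableSet_Ico] with s hs
      have h1 : dist (F s) (F t) < δ/2 := by
        apply hθ' (mem_Ici.mpr hs.1)
        rw [Real.dist_eq, abs_of_nonneg (by linarith [hs.1])]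
        linarith [hs.2]
      rw [Real.norm_eq_abs]
      calc |F s| ≤ |F s - F t| + |F t| := by
            have := abs_sub_abs_le_abs_sub (F s) (F t); linarith [abs_abs (F t)]
        _ ≤ δ/2 + |F t| := by
            rw [Real.dist_eq] at h1; linarith
  have key : (ε⁻¹ * ∫ s in Ico t (t + ε), F s) - F t =
      ε⁻¹ * ∫ s in Ico t (t + ε), (F s - F t) := by
    rw [integral_sub hIntF (integrable_const _)]
    rw [setIntegral_const, measureReal_def, hvol, ENNReal.toReal_ofReal hε.le, smul_eq_mul]
    field_simp
  rw [Real.dist_eq]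
  have hb : ‖∫ s in Ico t (t + ε), (F s - F t)‖ ≤ (δ/2) * (volume (Ico t (t+ε))).toReal := by
    apply norm_setIntegral_le_of_norm_le_const_ae' (by rw [hvol]; exact ENNReal.ofReal_lt_top)
    filter_upwards with s hs
    have h1 : dist (F s) (F t) < δ/2 := by
      apply hθ' (mem_Ici.mpr hs.1)
      rw [Real.dist_eq, abs_of_nonneg (by linarith [hs.1])]
      linarith [hs.2]
    rw [Real.norm_eq_abs, ← Real.dist_eq]
    exact h1.le
  rw [hvol, ENNReal.toReal_ofReal hε.le] at hb
  have : |(ε⁻¹ * ∫ s in Ico t (t + ε), F s) - F t| ≤ δ/2 := by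
    rw [key, abs_mul, abs_of_pos (inv_pos.mpr hε)]
    rw [Real.norm_eq_abs] at hb
    calc ε⁻¹ * |∫ s in Ico t (t + ε), (F s - F t)| ≤ ε⁻¹ * ((δ/2)*ε) :=
          mul_le_mul_of_nonneg_left hb (inv_pos.mpr hε).le
      _ = δ/2 := by field_simp
  calc |(ε⁻¹ * ∫ s in Ico t (t + ε), F s) - F t| ≤ δ/2 := this
    _ < δ := by linarith

lemma fubini_lemma (a b ε M : ℝ) (hab : a < b) (hε : 0 < ε)
    (μ : Measure ℝ) [IsLocallyFiniteMeasure μ]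
    (F : ℝ → ℝ) (hF : Measurable F) (hM : ∀ s, |F s| ≤ M) :
    ∫ s : ℝ, F s * (μ (Ioc (max a (min (s - ε) b)) (max a (min s b)))).toReal =
      ∫ t in Ioc a b, (∫ s in Ico t (t + ε), F s) ∂μ := by
  set E : Set (ℝ × ℝ) := {p | p.2 ∈ Ioc a b ∧ p.1 ∈ Ico p.2 (p.2 + ε)} with hE
  have hEc : ∀ s t : ℝ, t ∈ Ioc (max a (min (s - ε) b)) (max a (min s b)) ↔ (s, t) ∈ E := by
    intro s t
    simp only [hE, mem_Ioc, mem_Ico, mem_setOf_eq]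
    constructor
    · rintro ⟨h1, h2⟩
      have hta : a < t := lt_of_le_of_lt (le_max_left _ _) h1
      have h2' : t ≤ min s b := by
        rcases le_max_iff.mp h2 with h | h
        · exact absurd h (not_le.mpr hta)
        · exact h
      have hts : t ≤ s := h2'.trans (min_le_left _ _)
      have htb : t ≤ b := h2'.trans (min_le_right _ _)
      have h1' : min (s - ε) b < t := lt_of_le_of_lt (le_max_right a _) h1
      have hst : s < t + ε := by
        rcases min_lt_iff.mp h1' with h | h
        · linarith
        · exact absurd h (not_lt.mpr htb)
      exact ⟨⟨hta, htb⟩, hts, hst⟩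
    · rintro ⟨⟨hta, htb⟩, hts, hst⟩
      refine ⟨max_lt hta (lt_of_le_of_lt (min_le_left _ _) (by linarith)), ?_⟩
      exact le_max_of_le_right (le_min hts htb)
  have hE_meas : MeasurableSet E := by
    apply MeasurableSet.inter
    · exact measurable_snd measurableSet_Ioc
    · apply MeasurableSet.inter
      · exact measurableSet_le measurable_snd measurable_fst
      · exact measurableSet_lt measurable_fst (measurable_snd.add_const ε)
  have hM0 : 0 ≤ M := le_trans (abs_nonneg _) (hM 0)
  -- integrability on the product
  set k : ℝ × ℝ → ℝ := fun p => F p.1 * E.indicator (fun _ => (1:ℝ)) p with hk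
  have hrect : MeasurableSet (Icc a (b + ε) ×ˢ Ioc a b) :=
    measurableSet_Icc.prod measurableSet_Ioc
  have hrect_fin : (volume.prod μ) (Icc a (b + ε) ×ˢ Ioc a b) < ⊤ := by
    rw [Measure.prod_prod]
    exact ENNReal.mul_lt_top (by simp) (lt_of_le_of_lt (measure_mono Ioc_subset_Icc_self)
      isCompact_Icc.measure_lt_top)
  have hk_int : Integrable k (volume.prod μ) := by
    apply Integrable.mono' (g := fun p => (Icc a (b + ε) ×ˢ Ioc a b).indicator (fun _ => M) p)
    · rw [integrable_indicator_iff hrect]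
      exact integrableOn_const hrect_fin.ne
    · exact ((hF.comp measurable_fst).mul
        ((measurable_const.indicator hE_meas))).aestronglyMeasurable
    · filter_upwards with p
      by_cases hp : p ∈ E
      · rw [hk]
        simp only [indicator_of_mem hp]
        rw [indicator_of_mem]
        · rw [mul_one, Real.norm_eq_abs]; exact hM _
        · obtain ⟨⟨hta, htb⟩, hts, hst⟩ := hp
          exact ⟨⟨le_of_lt (lt_of_lt_of_le hta hts), by linarith⟩, hta, htb⟩
      · simp only [hk, indicator_of_notMem hp, mul_zero, norm_zero]
        exact indicator_nonneg (fun _ _ => hM0) _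
  have swap := integral_integral_swap (f := fun s t => F s * E.indicator (fun _ => (1:ℝ)) (s, t))
    (μ := volume) (ν := μ) hk_int
  calc ∫ s : ℝ, F s * (μ (Ioc (max a (min (s - ε) b)) (max a (min s b)))).toReal
      = ∫ s : ℝ, ∫ t, F s * E.indicator (fun _ => (1:ℝ)) (s, t) ∂μ := by
        congr 1; funext s
        have : (fun t => E.indicator (fun _ => (1:ℝ)) (s, t)) =
            (Ioc (max a (min (s - ε) b)) (max a (min s b))).indicator (fun _ => (1:ℝ)) := by
          funext t
          by_cases ht : t ∈ Ioc (max a (min (s - ε) b)) (max a (min s b))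
          · rw [indicator_of_mem ((hEc s t).mp ht), indicator_of_mem ht]
          · rw [indicator_of_notMem (fun hc => ht ((hEc s t).mpr hc)),
              indicator_of_notMem ht]
        rw [integral_const_mul, this]
        exact congrArg (F s * ·) (integral_indicator_one measurableSet_Ioc).symm
    _ = ∫ t, ∫ s : ℝ, F s * E.indicator (fun _ => (1:ℝ)) (s, t) ∂volume ∂μ := swap
    _ = ∫ t, (Ioc a b).indicator (fun t => ∫ s in Ico t (t + ε), F s) t ∂μ := by
        congr 1; funext t
        by_cases ht : t ∈ Ioc a b
        · have : (fun s => F s * E.indicator (fun _ => (1:ℝ)) (s, t)) =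
              (Ico t (t + ε)).indicator F := by
            funext s
            by_cases hs : s ∈ Ico t (t + ε)
            · rw [indicator_of_mem (show (s,t) ∈ E from ⟨ht, hs⟩), indicator_of_mem hs, mul_one]
            · rw [indicator_of_notMem (show (s,t) ∉ E from fun hc => hs hc.2),
                indicator_of_notMem hs, mul_zero]
          rw [this, integral_indicator measurableSet_Ico, indicator_of_mem ht]
        · have : (fun s => F s * E.indicator (fun _ => (1:ℝ)) (s, t)) = fun _ => (0:ℝ) := by
            funext s
            rw [indicator_of_notMem (show (s,t) ∉ E from fun hc => ht hc.1), mul_zero]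
          rw [this, integral_zero, indicator_of_notMem ht]
    _ = ∫ t in Ioc a b, (∫ s in Ico t (t + ε), F s) ∂μ := by
        rw [integral_indicator measurableSet_Ioc]

lemma bdd_of_cadlag (a b : ℝ) (f fl : ℝ → ℝ)
    (hf_rc : ∀ x ∈ Ico a b, Tendsto f (𝓝[≥] x) (𝓝 (f x)))
    (hf_ll : ∀ x ∈ Ioc a b, Tendsto f (𝓝[<] x) (𝓝 (fl x))) :
    ∃ M, ∀ x ∈ Icc a b, |f x| ≤ M := by
  have key : ∀ S : Set ℝ, S ⊆ Icc a b → IsCompact S → ∃ M, ∀ x ∈ S, |f x| ≤ M := by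
    intro S hS hSc
    apply hSc.induction_on (p := fun u => ∃ M, ∀ x ∈ u, |f x| ≤ M)
    · exact ⟨0, by simp⟩
    · rintro u v huv ⟨M, hM⟩; exact ⟨M, fun x hx => hM x (huv hx)⟩
    · rintro u v ⟨M, hM⟩ ⟨N, hN⟩
      exact ⟨max M N, fun x hx => hx.elim (fun h => (hM x h).trans (le_max_left _ _))
        (fun h => (hN x h).trans (le_max_right _ _))⟩
    · intro x hx
      obtain ⟨hxa, hxb⟩ := hS hx
      have hright : x < b → ∀ᶠ y in 𝓝[≥] x, |f y| ≤ |f x| + 1 := by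
        intro h
        have := (continuous_abs.tendsto (f x)).comp (hf_rc x ⟨hxa, h⟩)
        filter_upwards [this.eventually (gt_mem_nhds (by linarith : |f x| < |f x| + 1))] with y hy
        exact hy.le
      have hleft : a < x → ∀ᶠ y in 𝓝[<] x, |f y| ≤ |fl x| + 1 := by
        intro h
        have := (continuous_abs.tendsto (fl x)).comp (hf_ll x ⟨h, hxb⟩)
        filter_upwards [this.eventually (gt_mem_nhds (by linarith : |fl x| < |fl x| + 1))] with y hy
        exact hy.le
      set C : ℝ := max (max (|f x| + 1) (|fl x| + 1)) (|f x|) with hC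
      have hev : ∀ᶠ y in 𝓝[S] x, |f y| ≤ C := by
        rcases lt_or_eq_of_le hxb with hxb' | hxb2
        · rcases lt_or_eq_of_le hxa with hxa' | hxa2
          · -- a < x < b : both sides
            apply eventually_nhdsWithin_of_eventually_nhds
            rw [← nhdsLT_sup_nhdsGE x, eventually_sup]
            constructor
            · filter_upwards [hleft hxa'] with y hy
              exact hy.trans ((le_max_right _ _).trans (le_max_left _ _))
            · filter_upwards [hright hxb'] with y hy
              exact hy.trans ((le_max_left _ _).trans (le_max_left _ _))
          · -- x = a
            have hmono : 𝓝[S] x ≤ 𝓝[≥] x :=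
              nhdsWithin_mono _ (fun y hy => by rw [mem_Ici, ← hxa2]; exact (hS hy).1)
            filter_upwards [hmono (hright hxb')] with y hy
            exact hy.trans ((le_max_left _ _).trans (le_max_left _ _))
        · -- x = b
          have hmono : 𝓝[S] x ≤ 𝓝[≤] x :=
            nhdsWithin_mono _ (fun y hy => by rw [mem_Iic, hxb2]; exact (hS hy).2)
          have hsplit : 𝓝[Iic x] x = 𝓝[<] x ⊔ pure x := by
            rw [← Iio_union_right, nhdsWithin_union, nhdsWithin_singleton]
          rcases lt_or_eq_of_le hxa with hxa' | hxa2
          · refine Eventually.filter_mono hmono ?_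
            rw [hsplit, eventually_sup]
            constructor
            · filter_upwards [hleft hxa'] with y hy
              exact hy.trans ((le_max_right _ _).trans (le_max_left _ _))
            · rw [eventually_pure]
              exact le_max_right _ _
          · -- a = x = b : S ⊆ {x}
            have hmono' : 𝓝[S] x ≤ pure x := by
              refine le_trans (nhdsWithin_mono _ ?_) (le_of_eq (nhdsWithin_singleton x))
              intro y hy
              have h1 := (hS hy).1; have h2 := (hS hy).2
              simp only [mem_singleton_iff]
              rw [← hxa2] at hxb2 ⊢
              linarith
            have hxmem : {y : ℝ | |f y| ≤ C} ∈ (pure x : Filter ℝ) := by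
              rw [Filter.mem_pure]; exact (le_max_right _ _ : |f x| ≤ C)
            filter_upwards [hmono' hxmem] with y hy
            exact hy
      exact ⟨_, eventually_iff.mp hev, C, fun y hy => hy⟩
  exact key _ (subset_refl _) isCompact_Icc

/-- Bounded measurable functions supported in a compact interval are integrable. -/
lemma integrable_of_bdd_compact {h : ℝ → ℝ} (hm : AEStronglyMeasurable h volume)
    (C lo hi : ℝ) (hb : ∀ x, ‖h x‖ ≤ (Icc lo hi).indicator (fun _ => C) x) :
    Integrable h (volume : Measure ℝ) := by
  apply Integrable.mono' _ hm (Eventually.of_forall hb)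
  rw [integrable_indicator_iff measurableSet_Icc]
  exact integrableOn_const isCompact_Icc.measure_lt_top.ne

/-- Integration by parts for the forward integral: if `f` is càdlàg on `[a,b]`, `g` is of
bounded variation (difference of Stieltjes functions on `[a,b]`), and the forward integral
`∫_{[a,b]} g d⁻f` exists (with value `L`), then `L = g(b)f(b) − ∫_{]a,b]} f(s) dg(s)`. -/
theorem stmt2 (a b : ℝ) (hab : a < b) (f fl g : ℝ → ℝ) (L : ℝ)
    (g₁ g₂ : StieltjesFunction ℝ)
    (hg : ∀ x ∈ Set.Icc a b, g x = g₁ x - g₂ x)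
    (hf_rc : ∀ x ∈ Set.Ico a b, Tendsto f (𝓝[≥] x) (𝓝 (f x)))
    (hf_ll : ∀ x ∈ Set.Ioc a b, Tendsto f (𝓝[<] x) (𝓝 (fl x)))
    (hlim : Tendsto
      (fun ε : ℝ => ∫ s : ℝ,
        (if s < a then g a else if s ≤ b then g s else 0) *
          ((if s + ε < a then 0 else if s + ε ≤ b then f (s + ε) else f b) -
            (if s < a then 0 else if s ≤ b then f s else f b)) / ε)
      (𝓝[>] 0) (𝓝 L)) :
    L = g b * f b -
      ((∫ s in Set.Ioc a b, f s ∂g₁.measure) - ∫ s in Set.Ioc a b, f s ∂g₂.measure) := by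
  have hab' : a ≤ b := hab.le
  set c : ℝ → ℝ := fun s => max a (min s b) with hc
  set F : ℝ → ℝ := fun s => if s < a then 0 else if s ≤ b then f s else f b with hFdef
  set G : ℝ → ℝ := fun s => if s < a then g a else if s ≤ b then g s else 0 with hGdef
  obtain ⟨M, hM⟩ := bdd_of_cadlag a b f fl hf_rc hf_ll
  have hM0 : 0 ≤ M := le_trans (abs_nonneg _) (hM a ⟨le_refl a, hab'⟩)
  have hFM : ∀ s, |F s| ≤ M := by
    intro s
    simp only [hFdef]
    split_ifs with h1 h2
    · simpa using hM0
    · exact hM s ⟨not_lt.mp h1, h2⟩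
    · exact hM b ⟨hab', le_refl b⟩
  have hF0 : ∀ s, s < a → F s = 0 := by
    intro s hs; simp only [hFdef]; rw [if_pos hs]
  have hFmid : ∀ s, a ≤ s → s ≤ b → F s = f s := by
    intro s h1 h2; simp only [hFdef]; rw [if_neg (not_lt.mpr h1), if_pos h2]
  have hFb : ∀ s, b ≤ s → F s = f b := by
    intro s hs
    simp only [hFdef]
    rw [if_neg (not_lt.mpr (hab'.trans hs))]
    rcases eq_or_lt_of_le hs with h | h
    · rw [if_pos (le_of_eq h.symm), ← h]
    · rw [if_neg (not_le.mpr h)]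
  have hFrc : ∀ x, Tendsto F (𝓝[≥] x) (𝓝 (F x)) := by
    intro x
    rcases lt_or_ge x a with hxa | hxa
    · -- x < a : F is 0 near x
      rw [hF0 x hxa]
      apply tendsto_const_nhds.congr'
      have hev : ∀ᶠ y in 𝓝 x, y ∈ Iio a := eventually_of_mem (Iio_mem_nhds hxa) fun _ h => h
      filter_upwards [eventually_nhdsWithin_of_eventually_nhds hev] with y hy
      exact (hF0 y hy).symm
    rcases lt_or_ge x b with hxb | hxb
    · -- a ≤ x < b
      rw [hFmid x hxa hxb.le]
      apply (hf_rc x ⟨hxa, hxb⟩).congr'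
      have hev : ∀ᶠ y in 𝓝 x, y ∈ Iio b := eventually_of_mem (Iio_mem_nhds hxb) fun _ h => h
      filter_upwards [eventually_nhdsWithin_of_eventually_nhds hev,
        eventually_mem_nhdsWithin] with y hy1 hy2
      exact (hFmid y (hxa.trans hy2) (le_of_lt hy1)).symm
    · -- b ≤ x : F is constantly f b on [x, ∞)
      rw [hFb x hxb]
      apply tendsto_const_nhds.congr'
      filter_upwards [eventually_mem_nhdsWithin] with y hy
      exact (hFb y (hxb.trans hy)).symm
  have hFmeas : Measurable F := meas_of_rightCont F hFrc
  have hclamp_mono : Monotone c := fun x y h => max_le_max le_rfl (min_le_min h le_rfl)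
  have hclamp_mem : ∀ s, c s ∈ Icc a b := fun s =>
    ⟨le_max_left _ _, max_le hab' (min_le_right _ _)⟩
  have hGeq : ∀ s, G s = g₁ (c s) - g₂ (c s) - (if b < s then g b else 0) := by
    intro s
    simp only [hGdef, hc]
    rcases lt_or_ge s a with h1 | h1
    · rw [if_pos h1, min_eq_left (h1.le.trans hab'), max_eq_left h1.le,
        if_neg (by linarith), sub_zero, ← hg a ⟨le_refl a, hab'⟩]
    rcases le_or_gt s b with h2 | h2
    · rw [if_neg (not_lt.mpr h1), if_pos h2, min_eq_left h2, max_eq_right h1,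
        if_neg (not_lt.mpr h2), sub_zero, ← hg s ⟨h1, h2⟩]
    · rw [if_neg (not_lt.mpr h1), if_neg (not_le.mpr h2), min_eq_right h2.le,
        max_eq_right hab', if_pos h2, ← hg b ⟨hab', le_refl b⟩, sub_self]
  have hGmeas : Measurable G := by
    have h1 : Measurable fun s => g₁ (c s) - g₂ (c s) - (if b < s then g b else 0) := by
      apply Measurable.sub
      · exact ((g₁.mono.comp hclamp_mono).measurable).sub
          ((g₂.mono.comp hclamp_mono).measurable)
      · exact Measurable.ite measurableSet_Ioi measurable_const measurable_const
    exact (funext hGeq : G = _) ▸ h1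
  obtain ⟨K, hK0, hKG⟩ : ∃ K, 0 ≤ K ∧ ∀ s, |G s| ≤ K := by
    refine ⟨|g₁ a| + |g₁ b| + |g₂ a| + |g₂ b| + |g a|, by positivity, fun s => ?_⟩
    have habs : ∀ x, a ≤ x → x ≤ b → |g x| ≤ |g₁ a| + |g₁ b| + |g₂ a| + |g₂ b| := by
      intro x hx1 hx2
      rw [hg x ⟨hx1, hx2⟩]
      have e1 := g₁.mono hx1; have e2 := g₁.mono hx2
      have e3 := g₂.mono hx1; have e4 := g₂.mono hx2
      have := neg_abs_le (g₁ a); have := le_abs_self (g₁ b)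
      have := neg_abs_le (g₂ a); have := le_abs_self (g₂ b)
      have := abs_nonneg (g₁ a); have := abs_nonneg (g₂ a)
      have := abs_nonneg (g₁ b); have := abs_nonneg (g₂ b)
      rw [abs_le]
      constructor <;> linarith
    simp only [hGdef]
    split_ifs with h1 h2
    · have := abs_nonneg (g₁ a); have := abs_nonneg (g₂ a)
      have := abs_nonneg (g₁ b); have := abs_nonneg (g₂ b)
      linarith
    · have := habs s (not_lt.mp h1) h2
      have := abs_nonneg (g a)
      linarith
    · simp only [abs_zero]; positivity
  -- the exact formula for positive ε
  have hmain : ∀ ε : ℝ, 0 < ε →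
      (∫ s : ℝ, G s * (F (s + ε) - F s) / ε) = g b * f b +
        ((∫ t in Ioc a b, (∫ s in Ico t (t + ε), F s) ∂g₂.measure) -
         (∫ t in Ioc a b, (∫ s in Ico t (t + ε), F s) ∂g₁.measure)) / ε := by
    intro ε hε
    have hcmono' : ∀ s : ℝ, c (s - ε) ≤ c s := fun s => hclamp_mono (by linarith)
    have hca : ∀ s : ℝ, s ≤ a → c s = a := by
      intro s hs; simp only [hc]; rw [min_eq_left (hs.trans hab'), max_eq_left hs]
    have hcb : ∀ s : ℝ, b ≤ s → c s = b := by
      intro s hs; simp only [hc]; rw [min_eq_right hs, max_eq_right hab']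
    have hG0 : ∀ s : ℝ, b < s → G s = 0 := by
      intro s hs
      simp only [hGdef]
      rw [if_neg (not_lt.mpr (hab'.trans hs.le)), if_neg (not_le.mpr hs)]
    set D₁ : ℝ → ℝ := fun s => g₁ (c s) - g₁ (c (s - ε)) with hD₁def
    set D₂ : ℝ → ℝ := fun s => g₂ (c s) - g₂ (c (s - ε)) with hD₂def
    have hcomp : ∀ g' : StieltjesFunction ℝ, Measurable (fun s : ℝ => g' (c s) - g' (c (s - ε))) :=
      fun g' => ((g'.mono.comp hclamp_mono).measurable).sub
        (((g'.mono.comp hclamp_mono).measurable).comp (measurable_id.sub_const ε))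
    have hDbound : ∀ (g' : StieltjesFunction ℝ) (s : ℝ),
        ‖(g' (c s) - g' (c (s - ε))) * F s‖ ≤
          (Icc a (b + ε)).indicator (fun _ => (g' b - g' a) * M) s := by
      intro g' s
      rw [Real.norm_eq_abs]
      by_cases hs : s ∈ Icc a (b + ε)
      · rw [indicator_of_mem hs, abs_mul]
        apply mul_le_mul ?_ (hFM s) (abs_nonneg _) (sub_nonneg.2 (g'.mono hab'))
        rw [abs_le]
        constructor <;>
          linarith [g'.mono (hclamp_mem s).1, g'.mono (hclamp_mem s).2,
            g'.mono (hclamp_mem (s - ε)).1, g'.mono (hclamp_mem (s - ε)).2]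
      · rw [indicator_of_notMem hs]
        simp only [mem_Icc, not_and_or, not_le] at hs
        have hceq : c (s - ε) = c s := by
          rcases hs with hs | hs
          · rw [hca s hs.le, hca (s - ε) (by linarith)]
          · rw [hcb s (by linarith), hcb (s - ε) (by linarith)]
        rw [hceq, sub_self, zero_mul, abs_zero]
    have hID1 : Integrable (fun s : ℝ => D₁ s * F s) volume :=
      integrable_of_bdd_compact (((hcomp g₁).mul hFmeas).aestronglyMeasurable)
        ((g₁ b - g₁ a) * M) a (b + ε) (hDbound g₁)
    have hID2 : Integrable (fun s : ℝ => D₂ s * F s) volume :=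
      integrable_of_bdd_compact (((hcomp g₂).mul hFmeas).aestronglyMeasurable)
        ((g₂ b - g₂ a) * M) a (b + ε) (hDbound g₂)
    have hI1 : Integrable (fun s : ℝ => G s * F (s + ε)) volume := by
      apply integrable_of_bdd_compact (h := fun s : ℝ => G s * F (s + ε))
        ((hGmeas.mul (hFmeas.comp (measurable_add_const ε))).aestronglyMeasurable)
        (K * M) (a - ε) b
      intro s
      rw [Real.norm_eq_abs]
      by_cases hs : s ∈ Icc (a - ε) b
      · rw [indicator_of_mem hs, abs_mul]
        exact mul_le_mul (hKG s) (hFM _) (abs_nonneg _) hK0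
      · rw [indicator_of_notMem hs]
        simp only [mem_Icc, not_and_or, not_le] at hs
        rcases hs with hs | hs
        · rw [hF0 (s + ε) (by linarith), mul_zero, abs_zero]
        · rw [hG0 s hs, zero_mul, abs_zero]
    have hI2 : Integrable (fun s : ℝ => G s * F s) volume := by
      apply integrable_of_bdd_compact (h := fun s : ℝ => G s * F s) ((hGmeas.mul hFmeas).aestronglyMeasurable) (K * M) a b
      intro s
      rw [Real.norm_eq_abs]
      by_cases hs : s ∈ Icc a b
      · rw [indicator_of_mem hs, abs_mul]
        exact mul_le_mul (hKG s) (hFM _) (abs_nonneg _) hK0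
      · rw [indicator_of_notMem hs]
        simp only [mem_Icc, not_and_or, not_le] at hs
        rcases hs with hs | hs
        · rw [hF0 s hs, mul_zero, abs_zero]
        · rw [hG0 s hs, zero_mul, abs_zero]
    have hI3 : Integrable (fun s : ℝ => G (s - ε) * F s) volume := by
      apply integrable_of_bdd_compact (h := fun s : ℝ => G (s - ε) * F s)
        (((hGmeas.comp (measurable_id.sub_const ε)).mul hFmeas).aestronglyMeasurable)
        (K * M) a (b + ε)
      intro s
      rw [Real.norm_eq_abs]
      by_cases hs : s ∈ Icc a (b + ε)
      · rw [indicator_of_mem hs, abs_mul]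
        exact mul_le_mul (hKG _) (hFM _) (abs_nonneg _) hK0
      · rw [indicator_of_notMem hs]
        simp only [mem_Icc, not_and_or, not_le] at hs
        rcases hs with hs | hs
        · rw [hF0 s hs, mul_zero, abs_zero]
        · rw [hG0 (s - ε) (by linarith), zero_mul, abs_zero]
    have hI6 : Integrable ((Ioc b (b + ε)).indicator (fun u => g b * F u)) volume := by
      apply integrable_of_bdd_compact (h := (Ioc b (b + ε)).indicator (fun u => g b * F u))
        (((measurable_const.mul hFmeas).indicator measurableSet_Ioc).aestronglyMeasurable)
        (|g b| * M) b (b + ε)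
      intro s
      rw [Real.norm_eq_abs]
      by_cases hs : s ∈ Ioc b (b + ε)
      · rw [indicator_of_mem hs, indicator_of_mem (Ioc_subset_Icc_self hs), abs_mul]
        exact mul_le_mul le_rfl (hFM _) (abs_nonneg _) (abs_nonneg _)
      · rw [indicator_of_notMem hs, abs_zero]
        apply indicator_nonneg (fun _ _ => by positivity)
    have hpt : ∀ s : ℝ, (G (s - ε) - G s) * F s =
        (D₂ s * F s - D₁ s * F s) + (Ioc b (b + ε)).indicator (fun u => g b * F u) s := by
      intro s
      rw [hGeq (s - ε), hGeq s]
      simp only [hD₁def, hD₂def]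
      by_cases h1 : b < s - ε
      · rw [if_pos h1, if_pos (by linarith : b < s),
          indicator_of_notMem (fun hmem : s ∈ Ioc b (b + ε) =>
            absurd hmem.2 (not_le.mpr (by linarith)))]
        ring
      · rw [if_neg h1]
        by_cases h2 : b < s
        · rw [if_pos h2, indicator_of_mem
            (show s ∈ Ioc b (b + ε) from ⟨h2, by linarith [not_lt.mp h1]⟩) (fun u => g b * F u)]
          ring
        · rw [if_neg h2, indicator_of_notMem (fun hmem : s ∈ Ioc b (b + ε) => h2 hmem.1)]
          ring
    have hfub : ∀ g' : StieltjesFunction ℝ,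
        (∫ s : ℝ, (g' (c s) - g' (c (s - ε))) * F s) =
          ∫ t in Ioc a b, (∫ s in Ico t (t + ε), F s) ∂g'.measure := by
      intro g'
      rw [← fubini_lemma a b ε M hab hε g'.measure F hFmeas hFM]
      congr 1; funext s
      rw [StieltjesFunction.measure_Ioc,
        ENNReal.toReal_ofReal (sub_nonneg.2 (g'.mono (hcmono' s))), mul_comm]
    calc (∫ s : ℝ, G s * (F (s + ε) - F s) / ε)
        = (∫ s : ℝ, (G s * F (s + ε) - G s * F s)) / ε := by
          rw [← integral_div]; congr 1; funext s; ring
      _ = ((∫ s : ℝ, G s * F (s + ε)) - ∫ s : ℝ, G s * F s) / ε := by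
          rw [integral_sub hI1 hI2]
      _ = ((∫ s : ℝ, G (s - ε) * F s) - ∫ s : ℝ, G s * F s) / ε := by
          have htr := integral_add_right_eq_self (μ := volume) (fun u => G (u - ε) * F u) ε
          congr 2
          rw [← htr]
          congr 1
          funext x
          rw [add_sub_cancel_right]
      _ = (∫ s : ℝ, (G (s - ε) - G s) * F s) / ε := by
          rw [← integral_sub hI3 hI2]
          congr 1
          apply integral_congr_ae
          filter_upwards with s
          ring
      _ = ((∫ s : ℝ, (D₂ s * F s - D₁ s * F s)) +
            ∫ s : ℝ, (Ioc b (b + ε)).indicator (fun u => g b * F u) s) / ε := by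
          congr 1
          rw [show (fun s : ℝ => (G (s - ε) - G s) * F s) =
              fun s : ℝ => (D₂ s * F s - D₁ s * F s) +
                (Ioc b (b + ε)).indicator (fun u => g b * F u) s from funext hpt]
          exact integral_add (hID2.sub hID1) hI6
      _ = ((∫ s : ℝ, D₂ s * F s) - (∫ s : ℝ, D₁ s * F s) + g b * (ε * f b)) / ε := by
          congr 2
          · rw [integral_sub hID2 hID1]
          · rw [integral_indicator measurableSet_Ioc,
              setIntegral_congr_fun measurableSet_Ioc
                (fun s hs => by rw [hFb s hs.1.le] : ∀ s ∈ Ioc b (b + ε), g b * F s = g b * f b),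
              setIntegral_const, measureReal_def, Real.volume_Ioc, show b + ε - b = ε by ring,
              ENNReal.toReal_ofReal hε.le, smul_eq_mul]
            ring
      _ = g b * f b +
          ((∫ t in Ioc a b, (∫ s in Ico t (t + ε), F s) ∂g₂.measure) -
           (∫ t in Ioc a b, (∫ s in Ico t (t + ε), F s) ∂g₁.measure)) / ε := by
          rw [show (∫ s : ℝ, D₁ s * F s) =
              ∫ t in Ioc a b, (∫ s in Ico t (t + ε), F s) ∂g₁.measure from hfub g₁,
            show (∫ s : ℝ, D₂ s * F s) =
              ∫ t in Ioc a b, (∫ s in Ico t (t + ε), F s) ∂g₂.measure from hfub g₂]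
          field_simp
          ring
  -- convergence of the averaged integrals
  have havg : ∀ μ : Measure ℝ, IsLocallyFiniteMeasure μ → μ (Ioc a b) ≠ ⊤ →
      Tendsto (fun ε : ℝ => (∫ t in Ioc a b, (∫ s in Ico t (t + ε), F s) ∂μ) / ε)
        (𝓝[>] (0:ℝ)) (𝓝 (∫ t in Ioc a b, f t ∂μ)) := by
    intro μ hloc hfin
    have hFint : ∀ u v : ℝ, IntervalIntegrable F volume u v := by
      intro u v
      rw [intervalIntegrable_iff]
      haveI : IsFiniteMeasure (volume.restrict (Set.uIoc u v)) := by
        constructor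
        rw [Measure.restrict_apply_univ, Set.uIoc, Real.volume_Ioc]
        exact ENNReal.ofReal_lt_top
      apply Integrable.mono' (g := fun _ => M) (integrable_const _)
        hFmeas.aestronglyMeasurable.restrict
      filter_upwards with s
      rw [Real.norm_eq_abs]; exact hFM s
    have hprim : Continuous (fun u => ∫ s in (0:ℝ)..u, F s) :=
      intervalIntegral.continuous_primitive (fun u v => hFint u v) 0
    have hIcoIoc : ∀ t ε : ℝ, 0 < ε →
        (∫ s in Ico t (t + ε), F s) = ∫ s in t..(t + ε), F s := by
      intro t ε hε
      rw [setIntegral_congr_set Ico_ae_eq_Ioc,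
        intervalIntegral.integral_of_le (by linarith : t ≤ t + ε)]
    have hcont : ∀ ε : ℝ, 0 < ε → Continuous (fun t => ∫ s in Ico t (t + ε), F s) := by
      intro ε hε
      have : (fun t => ∫ s in Ico t (t + ε), F s) =
          fun t => (∫ s in (0:ℝ)..(t + ε), F s) - ∫ s in (0:ℝ)..t, F s := by
        funext t
        rw [hIcoIoc t ε hε, ← intervalIntegral.integral_interval_sub_left
          (hFint 0 (t + ε)) (hFint 0 t)]
      rw [this]
      exact (hprim.comp (continuous_id.add continuous_const)).sub hprim
    have key := tendsto_integral_filter_of_dominated_convergence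
      (μ := μ.restrict (Ioc a b)) (l := 𝓝[>] (0:ℝ))
      (F := fun ε t => ε⁻¹ * ∫ s in Ico t (t + ε), F s) (f := f)
      (bound := fun _ => M) ?_ ?_ ?_ ?_
    · have : (fun ε : ℝ => (∫ t in Ioc a b, (∫ s in Ico t (t + ε), F s) ∂μ) / ε) =ᶠ[𝓝[>] (0:ℝ)]
          (fun ε : ℝ => ∫ t in Ioc a b, ε⁻¹ * (∫ s in Ico t (t + ε), F s) ∂μ) := by
        filter_upwards with ε
        rw [integral_const_mul, div_eq_inv_mul]
      exact key.congr' this.symm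
    · filter_upwards [self_mem_nhdsWithin] with ε hε
      exact ((continuous_const.mul (hcont ε hε)).aestronglyMeasurable)
    · filter_upwards [self_mem_nhdsWithin] with ε hε
      rw [mem_Ioi] at hε
      apply ae_of_all
      intro t
      have h1 : ‖∫ s in Ico t (t + ε), F s‖ ≤ M * (volume (Ico t (t + ε))).toReal := by
        apply norm_setIntegral_le_of_norm_le_const_ae'
          (by rw [Real.volume_Ico]; exact ENNReal.ofReal_lt_top)
        filter_upwards with s _
        rw [Real.norm_eq_abs]; exact hFM s
      rw [Real.volume_Ico, show t + ε - t = ε by ring, ENNReal.toReal_ofReal hε.le] at h1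
      rw [norm_mul, Real.norm_eq_abs, abs_inv, abs_of_pos hε]
      calc ε⁻¹ * ‖∫ s in Ico t (t + ε), F s‖ ≤ ε⁻¹ * (M * ε) :=
            mul_le_mul_of_nonneg_left h1 (inv_pos.mpr hε).le
        _ = M := by field_simp
    · rw [integrable_const_iff]
      right
      constructor; rw [Measure.restrict_apply_univ]
      exact lt_top_iff_ne_top.mpr hfin
    · rw [ae_restrict_iff' measurableSet_Ioc]
      apply ae_of_all
      intro t ht
      have h := avg_tendsto_s2 F hFmeas t (hFrc t)
      rwa [hFmid t ht.1.le ht.2] at h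
  have hμ₁ : (g₁.measure) (Ioc a b) ≠ ⊤ := by
    rw [StieltjesFunction.measure_Ioc]; exact ENNReal.ofReal_ne_top
  have hμ₂ : (g₂.measure) (Ioc a b) ≠ ⊤ := by
    rw [StieltjesFunction.measure_Ioc]; exact ENNReal.ofReal_ne_top
  have hT : Tendsto
      (fun ε : ℝ => g b * f b +
        ((∫ t in Ioc a b, (∫ s in Ico t (t + ε), F s) ∂g₂.measure) -
         (∫ t in Ioc a b, (∫ s in Ico t (t + ε), F s) ∂g₁.measure)) / ε)
      (𝓝[>] (0:ℝ))
      (𝓝 (g b * f b + ((∫ t in Ioc a b, f t ∂g₂.measure) -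
        (∫ t in Ioc a b, f t ∂g₁.measure)))) := by
    apply tendsto_const_nhds.add
    have h2 := havg g₂.measure inferInstance hμ₂
    have h1 := havg g₁.measure inferInstance hμ₁
    simpa [sub_div] using h2.sub h1
  have hlim' : Tendsto
      (fun ε : ℝ => ∫ s : ℝ, G s * (F (s + ε) - F s) / ε) (𝓝[>] (0:ℝ))
      (𝓝 (g b * f b + ((∫ t in Ioc a b, f t ∂g₂.measure) -
        (∫ t in Ioc a b, f t ∂g₁.measure)))) := by
    apply hT.congr'
    filter_upwards [self_mem_nhdsWithin] with ε hε
    exact (hmain ε hε).symm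
  have := tendsto_nhds_unique hlim hlim'
  rw [this]; ring
end

section
/- For each a ∈ ℝ, the set C_a([-T,0]) = {η ∈ C([-T,0]) : η(0) = a} is dense in 𝒞_a([-T,0]) = {η ∈ 𝒞([-T,0]) : η(0) = a} with respect to the convergence of 𝒞([-T,0]) (uniform boundedness, uniform convergence on compacts of [-T,0[, and convergence at 0). -/
open Filter Topology Set

/-- `C_a([-T,0])` is dense in `𝒞_a([-T,0])`: for every bounded `η` continuous on `[-T,0[`
with `η(0) = a`, there is a sequence of continuous functions on `[-T,0]` with value `a` at
`0` that is uniformly bounded, converges to `η` uniformly on every compact of `[-T,0[`, and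
converges to `η(0)` at `0`. -/
theorem stmt5 (T : ℝ) (hT : 0 < T) (a : ℝ) (η : ℝ → ℝ)
    (hηb : ∃ C, ∀ x ∈ Set.Icc (-T) (0:ℝ), |η x| ≤ C)
    (hηc : ContinuousOn η (Set.Ico (-T) 0))
    (hη0 : η 0 = a) :
    ∃ φ : ℕ → ℝ → ℝ,
      (∀ n, ContinuousOn (φ n) (Set.Icc (-T) 0)) ∧
      (∀ n, φ n 0 = a) ∧
      (∃ C, ∀ n, ∀ x ∈ Set.Icc (-T) (0:ℝ), |φ n x| ≤ C) ∧
      (∀ K ⊆ Set.Ico (-T) (0:ℝ), IsCompact K → TendstoUniformlyOn φ η atTop K) ∧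
      Tendsto (fun n => φ n 0) atTop (𝓝 (η 0)) := by
  obtain ⟨C, hC⟩ := hηb
  set ε : ℕ → ℝ := fun n => T / (n + 2) with hεdef
  have hεpos : ∀ n, 0 < ε n := by intro n; positivity
  have hεle : ∀ n, ε n ≤ T := by
    intro n
    exact div_le_self hT.le (by push_cast; linarith [Nat.cast_nonneg (α := ℝ) n])
  set φ : ℕ → ℝ → ℝ :=
    fun n x => η (min x (-(ε n))) + (a - η (-(ε n))) * max (1 + x / ε n) 0 with hφdef
  have hφ0 : ∀ n, φ n 0 = a := by
    intro n
    have h1 : min (0:ℝ) (-(ε n)) = -(ε n) := min_eq_right (by linarith [hεpos n])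
    simp [hφdef, h1]
  refine ⟨φ, ?_, hφ0, ?_, ?_, ?_⟩
  · -- continuity
    intro n
    apply ContinuousOn.add
    · apply hηc.comp (Continuous.continuousOn (by continuity))
      intro x hx
      refine ⟨le_min hx.1 (by linarith [hεle n]), ?_⟩
      exact lt_of_le_of_lt (min_le_right _ _) (by linarith [hεpos n])
    · exact Continuous.continuousOn (by continuity)
  · -- uniform bound
    refine ⟨C + (|a| + C), fun n x hx => ?_⟩
    have h1 : |η (min x (-(ε n)))| ≤ C := by
      apply hC
      exact ⟨le_min hx.1 (by linarith [hεle n]),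
        le_trans (min_le_right _ _) (by linarith [hεpos n])⟩
    have h2 : |η (-(ε n))| ≤ C := hC _ ⟨by linarith [hεle n], by linarith [hεpos n]⟩
    have h3 : max (1 + x / ε n) 0 ≤ 1 := by
      apply max_le _ zero_le_one
      have : x / ε n ≤ 0 := div_nonpos_of_nonpos_of_nonneg hx.2 (hεpos n).le
      linarith
    have h4 : (0:ℝ) ≤ max (1 + x / ε n) 0 := le_max_right _ _
    have h5 : |a - η (-(ε n))| ≤ |a| + C := by
      have := abs_sub_abs_le_abs_sub a (η (-(ε n)))
      have h6 := abs_abs_sub_abs_le_abs_sub a (η (-(ε n)))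
      have h7 := abs_sub a (η (-(ε n)))
      linarith [abs_nonneg (a - η (-(ε n)))]
    calc |φ n x| ≤ |η (min x (-(ε n)))| + |(a - η (-(ε n))) * max (1 + x / ε n) 0| :=
          abs_add_le _ _
      _ ≤ C + (|a| + C) := by
          rw [abs_mul, abs_of_nonneg h4]
          have hac : (0:ℝ) ≤ |a| + C := add_nonneg (abs_nonneg a) ((abs_nonneg _).trans h2)
          have := mul_le_mul h5 h3 h4 hac
          linarith
  · -- uniform convergence on compacts
    intro K hK hKc
    rcases K.eq_empty_or_nonempty with rfl | hne
    · exact tendstoUniformlyOn_empty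
    have hsup := hKc.sSup_mem hne
    have hδ : sSup K < 0 := (hK hsup).2
    have htend : Tendsto ε atTop (𝓝 0) := by
      apply Tendsto.div_atTop tendsto_const_nhds
      exact tendsto_atTop_add_const_right _ 2 tendsto_natCast_atTop_atTop
    rw [Metric.tendstoUniformlyOn_iff]
    intro r hr
    filter_upwards [htend.eventually (Iio_mem_nhds (show (0:ℝ) < -sSup K by linarith))]
      with n hn x hx
    have hxsup : x ≤ sSup K := le_csSup hKc.bddAbove hx
    have hxε : x < -(ε n) := by have := hn; linarith
    have hmin : min x (-(ε n)) = x := min_eq_left hxε.le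
    have hmax : max (1 + x / ε n) 0 = 0 := by
      apply max_eq_right
      have : x / ε n < -1 := by
        rw [div_lt_iff₀ (hεpos n)]; linarith
      linarith
    simp [hφdef, hmin, hmax, hr]
  · -- convergence at 0
    simp only [hφ0, hη0]
    exact tendsto_const_nhds
end
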